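/- For a set S of non-pointed matrices (S ⊆ matr), the following are equivalent: (i) every finitely complete category with S-closed relations is a preorder; (ii) the category of Boolean algebras does not have S-closed relations. -/

import Mathlib

open CategoryTheory CategoryTheory.Limits

universe w v u

/-- A (non-pointed) extended matrix `M ∈ matr(n,m,k)`: `n > 0` rows, `m` left
columns and one right column, with entries in `{x₁, …, x_k}` (modelled as
`Fin k`). `matr` is the union over all `n,m,k`, i.e. the type `Matr`. -/
structure Matr where
  n : ℕ
  m : ℕ
  k : ℕ
  npos : 0 < n
  left : Fin n → Fin m → Fin k
  right : Fin n → Fin k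

namespace Matr

variable {C : Type u} [Category.{v} C]

/-- A relation `r : R ⟶ P`, where `pr` exhibits `P` as the `n`-fold product
`Xⁿ`, is `M`-closed: for every object `Z` and every interpretation
`f : {x₁,…,x_k} → C(Z,X)` of the entries of `M`, if for every left column `j`
the induced morphism `Z ⟶ Xⁿ` factors through `r`, then so does the morphism
induced by the right column. -/
def IsClosed (M : Matr) {X P R : C} (pr : Fin M.n → (P ⟶ X))
    (hP : IsLimit (Fan.mk P pr)) (r : R ⟶ P) : Prop :=
  ∀ (Z : C) (f : Fin M.k → (Z ⟶ X)),
    (∀ j : Fin M.m, ∃ g : Z ⟶ R,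
        g ≫ r = hP.lift (Fan.mk Z (fun i => f (M.left i j)))) →
    ∃ g : Z ⟶ R, g ≫ r = hP.lift (Fan.mk Z (fun i => f (M.right i)))

/-- A relation `r : R ⟶ P`, where `pr` exhibits `P` as the product
`X₁ × ⋯ × X_n` of a family `X : Fin n → C`, is strictly `M`-closed: for every
object `Z` and every row-wise interpretation `fᵢ : {x₁,…,x_k} → C(Z,Xᵢ)`, if
every left column's induced morphism `Z ⟶ X₁ × ⋯ × X_n` factors through `r`,
then so does the right column's induced morphism. -/
def IsStrictClosed (M : Matr) {X : Fin M.n → C} {P R : C}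
    (pr : ∀ i, P ⟶ X i) (hP : IsLimit (Fan.mk P pr)) (r : R ⟶ P) : Prop :=
  ∀ (Z : C) (f : ∀ i, Fin M.k → (Z ⟶ X i)),
    (∀ j : Fin M.m, ∃ g : Z ⟶ R,
        g ≫ r = hP.lift (Fan.mk Z (fun i => f i (M.left i j)))) →
    ∃ g : Z ⟶ R, g ≫ r = hP.lift (Fan.mk Z (fun i => f i (M.right i)))

/-- `C` has `M`-closed `W`-relations: every `n`-ary relation `r : R ⟶ Xⁿ`
belonging to the class of monomorphisms `W` is `M`-closed. -/
def HasClosedRels (M : Matr) (C : Type u) [Category.{v} C]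
    (W : MorphismProperty C) : Prop :=
  ∀ (X P R : C) (pr : Fin M.n → (P ⟶ X)) (hP : IsLimit (Fan.mk P pr))
    (r : R ⟶ P), W r → M.IsClosed pr hP r

/-- `C` has `S`-closed `W`-relations. -/
def HasSClosedRels (S : Set Matr) (C : Type u) [Category.{v} C]
    (W : MorphismProperty C) : Prop :=
  ∀ M ∈ S, HasClosedRels M C W

end Matr

/-- The class of strong monomorphisms of `C`, as a `MorphismProperty`. -/
def strongMonos (C : Type u) [Category.{v} C] : MorphismProperty C :=
  fun _ _ f => StrongMono f


/-- A 2-valued "conflict" witnessing degeneracy of the matrix `M`. -/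
def Matr.Conflict (M : Matr) : Prop :=
  ∃ (i₀ i₁ : Fin M.n) (a a' : Fin M.k → Bool),
    (∀ j, a (M.left i₀ j) = a' (M.left i₁ j)) ∧
      a (M.right i₀) = true ∧ a' (M.right i₁) = false

section BooleanTerm

open Finset

variable {α : Type*} [BooleanAlgebra α]

/-- Literal: `y` if `c = true`, else `yᶜ`. -/
def blit (c : Bool) (y : α) : α := if c then y else yᶜ

lemma blit_map {β : Type*} [BooleanAlgebra β] (f : BoundedLatticeHom α β) (c : Bool) (y : α) :
    f (blit c y) = blit c (f y) := by
  cases c <;> simp [blit, map_compl']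

lemma blit_inf_neg (c : Bool) (y : α) : blit c y ⊓ blit (!c) y = ⊥ := by
  cases c <;> simp [blit]

lemma blit_inf_neg' {c c' : Bool} (h : c ≠ c') (y : α) : blit c y ⊓ blit c' y = ⊥ := by
  cases c <;> cases c' <;> simp_all [blit]

variable {k : ℕ}

/-- The atom associated to a 2-valued assignment `b`. -/
def batom (x : Fin k → α) (b : Fin k → Bool) : α :=
  Finset.univ.inf fun t => blit (b t) (x t)

lemma sup_batom (x : Fin k → α) :
    (Finset.univ : Finset (Fin k → Bool)).sup (batom x) = ⊤ := by
  classical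
  unfold batom
  suffices h : ∀ s : Finset (Fin k),
      (Finset.univ : Finset (Fin k → Bool)).sup (fun b => s.inf fun t => blit (b t) (x t)) = ⊤ by
    exact h _
  intro s
  induction s using Finset.induction_on with
  | empty =>
      simp only [Finset.inf_empty]
      exact Finset.sup_const ⟨fun _ => true, Finset.mem_univ _⟩ _
  | @insert a s ha IH =>
      refine le_antisymm le_top ?_
      conv_lhs => rw [← IH]
      refine Finset.sup_le fun b _ => ?_
      have key : ∀ c : Bool, blit c (x a) ⊓ s.inf (fun t => blit (b t) (x t)) ≤
          (Finset.univ : Finset (Fin k → Bool)).sup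
            (fun b' => (insert a s).inf fun t => blit (b' t) (x t)) := by
        intro c
        have : (insert a s).inf (fun t => blit (Function.update b a c t) (x t)) =
            blit c (x a) ⊓ s.inf (fun t => blit (b t) (x t)) := by
          rw [Finset.inf_insert, Function.update_self]
          congr 1
          refine Finset.inf_congr rfl fun t ht => ?_
          rw [Function.update_of_ne (fun h => ha (by subst h; exact ht))]
        rw [← this]
        exact Finset.le_sup (f := fun b' => (insert a s).inf fun t => blit (b' t) (x t))
          (Finset.mem_univ (Function.update b a c))
      calc s.inf (fun t => blit (b t) (x t))
          = (blit true (x a) ⊔ blit false (x a)) ⊓ s.inf (fun t => blit (b t) (x t)) := by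
            simp [blit]
        _ = blit true (x a) ⊓ s.inf (fun t => blit (b t) (x t)) ⊔
              blit false (x a) ⊓ s.inf (fun t => blit (b t) (x t)) := inf_sup_right _ _ _
        _ ≤ _ := sup_le (key true) (key false)

lemma batom_le_blit (x : Fin k → α) (b : Fin k → Bool) (t : Fin k) :
    batom x b ≤ blit (b t) (x t) :=
  Finset.inf_le (Finset.mem_univ t)

lemma eq_sup_batom (x : Fin k → α) (τ : Fin k) :
    x τ = (Finset.univ : Finset (Fin k → Bool)).sup
      (fun b => if b τ then batom x b else ⊥) := by
  classical
  refine le_antisymm ?_ (Finset.sup_le fun b _ => ?_)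
  · calc x τ = x τ ⊓ (Finset.univ : Finset (Fin k → Bool)).sup (batom x) := by
          rw [sup_batom]; exact (inf_top_eq _).symm
      _ = (Finset.univ : Finset (Fin k → Bool)).sup (fun b => x τ ⊓ batom x b) :=
          Finset.sup_inf_distrib_left _ _ _
      _ ≤ _ := by
          refine Finset.sup_mono_fun fun b _ => ?_
          by_cases hb : b τ
          · simp only [hb, if_true]; exact inf_le_right
          · simp only [hb, if_false]
            have hb' : b τ = false := by simpa using hb
            have h1 : batom x b ≤ (x τ)ᶜ := by
              have h2 := batom_le_blit x b τ
              rwa [hb'] at h2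
            calc x τ ⊓ batom x b ≤ x τ ⊓ (x τ)ᶜ := inf_le_inf_left _ h1
              _ = ⊥ := inf_compl_eq_bot
  · by_cases hb : b τ
    · simp only [hb, if_true]
      have h2 := batom_le_blit x b τ
      rwa [hb] at h2
    · simp [hb]

lemma inf_blit_eq_sup_batom (x : Fin k → α) {m : ℕ} (L : Fin m → Fin k) (v : Fin m → Bool) :
    (Finset.univ : Finset (Fin m)).inf (fun j => blit (v j) (x (L j))) =
      (Finset.univ : Finset (Fin k → Bool)).sup
        (fun b => if (∀ j, b (L j) = v j) then batom x b else ⊥) := by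
  classical
  refine le_antisymm ?_ (Finset.sup_le fun b _ => ?_)
  · calc (Finset.univ : Finset (Fin m)).inf (fun j => blit (v j) (x (L j)))
        = (Finset.univ : Finset (Fin m)).inf (fun j => blit (v j) (x (L j))) ⊓
            (Finset.univ : Finset (Fin k → Bool)).sup (batom x) := by
          rw [sup_batom]; exact (inf_top_eq _).symm
      _ = (Finset.univ : Finset (Fin k → Bool)).sup
            (fun b => (Finset.univ : Finset (Fin m)).inf (fun j => blit (v j) (x (L j))) ⊓
              batom x b) := Finset.sup_inf_distrib_left _ _ _
      _ ≤ _ := by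
          refine Finset.sup_mono_fun fun b _ => ?_
          by_cases hb : ∀ j, b (L j) = v j
          · rw [if_pos hb]; exact inf_le_right
          · rw [if_neg hb]
            obtain ⟨j, hj⟩ := not_forall.mp hb
            calc (Finset.univ : Finset (Fin m)).inf (fun j => blit (v j) (x (L j))) ⊓ batom x b
                ≤ blit (v j) (x (L j)) ⊓ blit (b (L j)) (x (L j)) :=
                  inf_le_inf (Finset.inf_le (Finset.mem_univ j)) (batom_le_blit x b (L j))
              _ = ⊥ := blit_inf_neg' (fun h => hj (h.symm)) _
  · by_cases hb : ∀ j, b (L j) = v j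
    · rw [if_pos hb]
      refine Finset.le_inf fun j _ => ?_
      have h2 := batom_le_blit x b (L j)
      rwa [hb j] at h2
    · rw [if_neg hb]; exact bot_le

/-- The `P` predicate: `v` is a left-column evaluation of a "true-right" assignment. -/
def Matr.Pv (M : Matr) (v : Fin M.m → Bool) : Prop :=
  ∃ (i : Fin M.n) (a : Fin M.k → Bool),
    (∀ j, v j = a (M.left i j)) ∧ a (M.right i) = true

open Classical in
/-- The m-ary Boolean operation associated to `M`. -/
noncomputable def Matr.termOp (M : Matr) (y : Fin M.m → α) : α :=
  (Finset.univ : Finset (Fin M.m → Bool)).sup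
    (fun v => if M.Pv v then (Finset.univ : Finset (Fin M.m)).inf (fun j => blit (v j) (y j))
      else ⊥)

lemma Matr.termOp_map {β : Type*} [BooleanAlgebra β] (M : Matr)
    (f : BoundedLatticeHom α β) (y : Fin M.m → α) :
    f (M.termOp y) = M.termOp (fun j => f (y j)) := by
  classical
  unfold Matr.termOp
  rw [map_finset_sup]
  refine Finset.sup_congr rfl fun v _ => ?_
  simp only [Function.comp_apply, apply_ite f, map_bot, map_finset_inf]
  congr 1
  exact Finset.inf_congr rfl fun j _ => blit_map f _ _

/-- Key identity: if `M` has no conflict, `termOp` satisfies the matrix identities. -/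
lemma Matr.termOp_identity (M : Matr) (hM : ¬ M.Conflict) (x : Fin M.k → α) (i : Fin M.n) :
    M.termOp (fun j => x (M.left i j)) = x (M.right i) := by
  classical
  unfold Matr.termOp
  have key : ∀ b : Fin M.k → Bool, M.Pv (fun j => b (M.left i j)) ↔ b (M.right i) = true := by
    intro b
    constructor
    · rintro ⟨i', a, hla, hra⟩
      by_contra hb
      exact hM ⟨i', i, a, b, fun j => (hla j).symm, hra, by simpa using hb⟩
    · intro hb
      exact ⟨i, b, fun _ => rfl, hb⟩
  refine le_antisymm (Finset.sup_le fun v _ => ?_) ?_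
  · by_cases hv : M.Pv v
    · rw [if_pos hv]
      rw [inf_blit_eq_sup_batom]
      refine Finset.sup_le fun b _ => ?_
      by_cases hbv : ∀ j, b (M.left i j) = v j
      · rw [if_pos hbv]
        have hPb : M.Pv (fun j => b (M.left i j)) := by
          have : (fun j => b (M.left i j)) = v := funext hbv
          rwa [this]
        have hbr : b (M.right i) = true := (key b).mp hPb
        have h2 := batom_le_blit x b (M.right i)
        rwa [hbr] at h2
      · rw [if_neg hbv]; exact bot_le
    · rw [if_neg hv]; exact bot_le
  · rw [eq_sup_batom x (M.right i)]
    refine Finset.sup_le fun b _ => ?_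
    by_cases hb : b (M.right i) = true
    · simp only [hb, if_true]
      have hPv : M.Pv (fun j => b (M.left i j)) := (key b).mpr hb
      refine le_trans ?_ (Finset.le_sup (f := fun v => if M.Pv v then
        (Finset.univ : Finset (Fin M.m)).inf (fun j => blit (v j) (x (M.left i j))) else ⊥)
        (Finset.mem_univ (fun j => b (M.left i j))))
      rw [if_pos hPv]
      exact Finset.le_inf fun j _ => batom_le_blit x b (M.left i j)
    · rw [if_neg hb]; exact bot_le


end BooleanTerm

/-! ### The category of Boolean algebras -/

noncomputable section BoolAlgSide

/-- Coerce a `BoolAlg` morphism to a `BoundedLatticeHom`. -/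
def bap {X Y : BoolAlg.{w}} (f : X ⟶ Y) : BoundedLatticeHom X Y := f.hom

lemma bap_comp {X Y Z : BoolAlg.{w}} (f : X ⟶ Y) (g : Y ⟶ Z) (x : X) :
    bap (f ≫ g) x = bap g (bap f x) := rfl

lemma bhom_ext {X Y : BoolAlg.{w}} {f g : X ⟶ Y} (h : ∀ x, bap f x = bap g x) : f = g :=
  BoolAlg.hom_ext (DFunLike.ext (bap f) (bap g) h)

lemma bap_sup {X Y : BoolAlg.{w}} (f : X ⟶ Y) (a b : X) :
    bap f (a ⊔ b) = bap f a ⊔ bap f b := map_sup (bap f) a b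
lemma bap_inf {X Y : BoolAlg.{w}} (f : X ⟶ Y) (a b : X) :
    bap f (a ⊓ b) = bap f a ⊓ bap f b := map_inf (bap f) a b
lemma bap_top {X Y : BoolAlg.{w}} (f : X ⟶ Y) : bap f ⊤ = ⊤ := map_top (bap f)
lemma bap_bot {X Y : BoolAlg.{w}} (f : X ⟶ Y) : bap f ⊥ = ⊥ := map_bot (bap f)

instance : HImp (ULift.{w} Bool) := ⟨fun a b => ULift.up (a.down ⇨ b.down)⟩

instance : BooleanAlgebra (ULift.{w} Bool) :=
  Function.Injective.booleanAlgebra ULift.down ULift.down_injective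
    Iff.rfl Iff.rfl (fun _ _ => rfl) (fun _ _ => rfl) rfl rfl (fun _ => rfl) (fun _ _ => rfl) (fun _ _ => rfl)

/-- The four-element Boolean algebra, as an object of `BoolAlg`. -/
abbrev bfour : BoolAlg.{w} := BoolAlg.of (ULift.{w} Bool × ULift.{w} Bool)

/-- The generic element morphism: the morphism `bfour ⟶ A` classifying `a : A`. -/
def belemHom {A : BoolAlg.{w}} (a : A) : bfour.{w} ⟶ A := BoolAlg.ofHom
  { toFun := fun p => cond p.1.down a ⊥ ⊔ cond p.2.down aᶜ ⊥
    map_sup' := by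
      rintro ⟨⟨c⟩, ⟨d⟩⟩ ⟨⟨c'⟩, ⟨d'⟩⟩
      show cond (c || c') a ⊥ ⊔ cond (d || d') aᶜ ⊥ = _
      cases c <;> cases c' <;> cases d <;> cases d' <;>
        simp [sup_comm, sup_assoc, sup_left_comm]
    map_inf' := by
      rintro ⟨⟨c⟩, ⟨d⟩⟩ ⟨⟨c'⟩, ⟨d'⟩⟩
      show cond (c && c') a ⊥ ⊔ cond (d && d') aᶜ ⊥ = _
      cases c <;> cases c' <;> cases d <;> cases d' <;>
        simp [inf_sup_left, inf_sup_right, inf_comm]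
    map_top' := by
      show cond true a ⊥ ⊔ cond true aᶜ ⊥ = ⊤
      simp
    map_bot' := by
      show cond false a ⊥ ⊔ cond false aᶜ ⊥ = ⊥
      simp }

lemma belemHom_natural {A B : BoolAlg.{w}} (f : A ⟶ B) (a : A) :
    belemHom a ≫ f = belemHom (bap f a) := by
  refine bhom_ext fun p => ?_
  show bap f _ = _
  show bap f (cond p.1.down a ⊥ ⊔ cond p.2.down aᶜ ⊥) =
    cond p.1.down (bap f a) ⊥ ⊔ cond p.2.down (bap f a)ᶜ ⊥
  rw [map_sup (bap f)]
  rcases p with ⟨⟨c⟩, ⟨d⟩⟩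
  congr 1
  · cases c <;> simp [map_bot]
  · cases d <;> simp [map_bot, map_compl']

lemma belemHom_true_false {A : BoolAlg.{w}} (a : A) :
    bap (belemHom a) (ULift.up true, ULift.up false) = a := by
  show cond true a ⊥ ⊔ cond false aᶜ ⊥ = a
  simp

lemma bool_mono_injective {X Y : BoolAlg.{w}} (r : X ⟶ Y) [Mono r] :
    Function.Injective (bap r) := by
  intro a b hab
  have h : belemHom a ≫ r = belemHom b ≫ r := by
    rw [belemHom_natural, belemHom_natural, hab]
  have h2 : belemHom a = belemHom b := (cancel_mono r).mp h
  calc a = bap (belemHom a) (ULift.up true, ULift.up false) := (belemHom_true_false a).symm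
    _ = bap (belemHom b) (ULift.up true, ULift.up false) := by rw [h2]
    _ = b := belemHom_true_false b

lemma bool_joint_injective {n : ℕ} {X P : BoolAlg.{w}} {pr : Fin n → (P ⟶ X)}
    (hP : IsLimit (Fan.mk P pr)) {p q : P}
    (h : ∀ i, bap (pr i) p = bap (pr i) q) : p = q := by
  have h2 : belemHom p = belemHom q := by
    refine hP.hom_ext fun ⟨i⟩ => ?_
    show belemHom p ≫ pr i = belemHom q ≫ pr i
    rw [belemHom_natural, belemHom_natural, h i]
  calc p = bap (belemHom p) (ULift.up true, ULift.up false) := (belemHom_true_false p).symm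
    _ = bap (belemHom q) (ULift.up true, ULift.up false) := by rw [h2]
    _ = q := belemHom_true_false q

lemma blift_fac {n : ℕ} {X P : BoolAlg.{w}} {pr : Fin n → (P ⟶ X)}
    (hP : IsLimit (Fan.mk P pr)) {Z : BoolAlg.{w}} (c : Fin n → (Z ⟶ X)) (i : Fin n) :
    hP.lift (Fan.mk Z c) ≫ pr i = c i :=
  hP.fac (Fan.mk Z c) ⟨i⟩

/-- If `M` has no conflict, then `BoolAlg` has `M`-closed relations. -/
theorem noConflict_hasClosedRels (M : Matr) (hM : ¬ M.Conflict) :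
    M.HasClosedRels BoolAlg.{w} (MorphismProperty.monomorphisms BoolAlg.{w}) := by
  intro X P R pr hP r hr Z f hleft
  have : Mono r := hr
  have hrinj : Function.Injective (bap r) := bool_mono_injective r
  choose g hg using hleft
  set ψ : Z ⟶ P := hP.lift (Fan.mk Z fun i => f (M.right i)) with hψ
  set G : Z → R := fun z => M.termOp (fun j => bap (g j) z) with hG
  have hrG : ∀ z, bap r (G z) = bap ψ z := by
    intro z
    refine bool_joint_injective hP fun i => ?_
    have lhs : bap (pr i) (bap r (G z)) = bap (f (M.right i)) z := by
      rw [hG]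
      show bap (pr i) (bap r (M.termOp fun j => bap (g j) z)) = _
      rw [M.termOp_map (bap r), M.termOp_map (bap (pr i))]
      have hcol : ∀ j, bap (pr i) (bap r (bap (g j) z)) = bap (f (M.left i j)) z := by
        intro j
        rw [← bap_comp, ← bap_comp, ← Category.assoc]
        rw [show (g j ≫ r) ≫ pr i = f (M.left i j) from by rw [hg j]; exact blift_fac hP _ i]
      calc M.termOp (fun j => bap (pr i) (bap r (bap (g j) z)))
          = M.termOp (fun j => bap (f (M.left i j)) z) := by
            congr 1; funext j; exact hcol j
        _ = bap (f (M.right i)) z := M.termOp_identity hM (fun t => bap (f t) z) i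
    have rhs : bap (pr i) (bap ψ z) = bap (f (M.right i)) z := by
      rw [← bap_comp, hψ, blift_fac hP _ i]
    rw [lhs, rhs]
  set gR : BoundedLatticeHom Z R :=
    { toFun := G
      map_sup' := fun z z' => hrinj (by
        rw [map_sup (bap r), hrG, hrG, hrG, ← map_sup (bap ψ)])
      map_inf' := fun z z' => hrinj (by
        rw [map_inf (bap r), hrG, hrG, hrG, ← map_inf (bap ψ)])
      map_top' := hrinj (by rw [hrG, map_top (bap r), map_top (bap ψ)])
      map_bot' := hrinj (by rw [hrG, map_bot (bap r), map_bot (bap ψ)]) }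
  exact ⟨BoolAlg.ofHom gR, bhom_ext fun z => hrG z⟩

end BoolAlgSide

section ConflictBoolAlg

noncomputable section

variable (M : Matr)

/-- carrier of the power object. -/
abbrev bP (M : Matr) : Type w := Fin M.n → ULift.{w} Bool × ULift.{w} Bool

/-- the `i`-th projection. -/
def bpr (i : Fin M.n) : BoolAlg.of (bP.{w} M) ⟶ bfour.{w} := BoolAlg.ofHom
  { toFun := fun p => p i
    map_sup' := fun _ _ => rfl
    map_inf' := fun _ _ => rfl
    map_top' := rfl
    map_bot' := rfl }

/-- the fan over `bfour` with point `bP`. -/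
def bFanIsLimit : IsLimit (Fan.mk (BoolAlg.of (bP.{w} M)) (bpr.{w} M)) := by
  refine mkFanLimit _ (fun s => BoolAlg.ofHom
    ({ toFun := fun z => fun i => bap (s.proj i) z
       map_sup' := fun z z' => funext fun i => bap_sup (s.proj i) z z'
       map_inf' := fun z z' => funext fun i => bap_inf (s.proj i) z z'
       map_top' := funext fun i => bap_top (s.proj i)
       map_bot' := funext fun i => bap_bot (s.proj i) } : BoundedLatticeHom s.pt (bP.{w} M)))
    (fun s i => bhom_ext fun z => rfl) (fun s m hm => bhom_ext fun z => funext fun i => ?_)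
  have := congrArg (fun h => bap h z) (hm i)
  exact this

end

end ConflictBoolAlg

section ConflictSide

noncomputable section

lemma cond_sup {γ : Type*} [BooleanAlgebra γ] (c : Bool) (x x' y y' : γ) :
    cond c (x ⊔ x') (y ⊔ y') = cond c x y ⊔ cond c x' y' := by cases c <;> rfl

lemma cond_inf {γ : Type*} [BooleanAlgebra γ] (c : Bool) (x x' y y' : γ) :
    cond c (x ⊓ x') (y ⊓ y') = cond c x y ⊓ cond c x' y' := by cases c <;> rfl

lemma cond_self {γ : Type*} (c : Bool) (x : γ) : cond c x x = x := by cases c <;> rfl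

variable (M : Matr) (i₀ i₁ : Fin M.n)

/-- The carrier of the equalizer-type relation. -/
def bRel : Type w := {wp : bP.{w} M // (wp i₀).1 = (wp i₁).2}

instance : Max (bRel.{w} M i₀ i₁) :=
  ⟨fun x y => ⟨x.1 ⊔ y.1, by show (x.1 i₀).1 ⊔ (y.1 i₀).1 = (x.1 i₁).2 ⊔ (y.1 i₁).2
                             rw [x.2, y.2]⟩⟩
instance : Min (bRel.{w} M i₀ i₁) :=
  ⟨fun x y => ⟨x.1 ⊓ y.1, by show (x.1 i₀).1 ⊓ (y.1 i₀).1 = (x.1 i₁).2 ⊓ (y.1 i₁).2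
                             rw [x.2, y.2]⟩⟩
instance : LE (bRel.{w} M i₀ i₁) := ⟨fun x y => x.1 ≤ y.1⟩
instance : LT (bRel.{w} M i₀ i₁) := ⟨fun x y => x.1 < y.1⟩
instance : Top (bRel.{w} M i₀ i₁) := ⟨⟨⊤, rfl⟩⟩
instance : Bot (bRel.{w} M i₀ i₁) := ⟨⟨⊥, rfl⟩⟩
instance : Compl (bRel.{w} M i₀ i₁) :=
  ⟨fun x => ⟨x.1ᶜ, by show (x.1 i₀).1ᶜ = (x.1 i₁).2ᶜ; rw [x.2]⟩⟩
instance : SDiff (bRel.{w} M i₀ i₁) :=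
  ⟨fun x y => ⟨x.1 \ y.1, by show (x.1 i₀).1 \ (y.1 i₀).1 = (x.1 i₁).2 \ (y.1 i₁).2
                             rw [x.2, y.2]⟩⟩
instance : HImp (bRel.{w} M i₀ i₁) :=
  ⟨fun x y => ⟨x.1 ⇨ y.1, by show (x.1 i₀).1 ⇨ (y.1 i₀).1 = (x.1 i₁).2 ⇨ (y.1 i₁).2
                             rw [x.2, y.2]⟩⟩

instance : BooleanAlgebra (bRel.{w} M i₀ i₁) :=
  Function.Injective.booleanAlgebra (Subtype.val) Subtype.val_injective
    Iff.rfl Iff.rfl (fun _ _ => rfl) (fun _ _ => rfl) rfl rfl (fun _ => rfl) (fun _ _ => rfl) (fun _ _ => rfl)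

/-- The relation morphism. -/
def bRelHom : BoolAlg.of (bRel.{w} M i₀ i₁) ⟶ BoolAlg.of (bP.{w} M) := BoolAlg.ofHom
  { toFun := Subtype.val
    map_sup' := fun _ _ => rfl
    map_inf' := fun _ _ => rfl
    map_top' := rfl
    map_bot' := rfl }

instance : Mono (bRelHom.{w} M i₀ i₁) := by
  constructor
  intro W u v h
  refine bhom_ext fun z => Subtype.ext ?_
  have := congrArg (fun hh => bap hh z) h
  exact this

/-- If `M` has a conflict, then `BoolAlg` does not have `M`-closed relations. -/
theorem conflict_not_hasClosedRels (M : Matr) (hC : M.Conflict) :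
    ¬ M.HasClosedRels BoolAlg.{w} (MorphismProperty.monomorphisms BoolAlg.{w}) := by
  obtain ⟨i₀, i₁, a, a', hL, hr₀, hr₁⟩ := hC
  intro h
  have hclosed := h bfour (BoolAlg.of (bP.{w} M)) (BoolAlg.of (bRel.{w} M i₀ i₁))
    (bpr.{w} M) (bFanIsLimit.{w} M) (bRelHom.{w} M i₀ i₁)
    (show Mono (bRelHom.{w} M i₀ i₁) from inferInstance)
  -- the interpretation
  set f : Fin M.k → (bfour.{w} ⟶ bfour.{w}) := fun t => BoolAlg.ofHom
    { toFun := fun z => (cond (a t) z.1 z.2, cond (a' t) z.1 z.2)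
      map_sup' := fun z z' => Prod.ext (cond_sup _ _ _ _ _) (cond_sup _ _ _ _ _)
      map_inf' := fun z z' => Prod.ext (cond_inf _ _ _ _ _) (cond_inf _ _ _ _ _)
      map_top' := Prod.ext (cond_self _ _) (cond_self _ _)
      map_bot' := Prod.ext (cond_self _ _) (cond_self _ _) } with hf
  have hleft : ∀ j : Fin M.m, ∃ g : bfour.{w} ⟶ BoolAlg.of (bRel.{w} M i₀ i₁),
      g ≫ bRelHom.{w} M i₀ i₁ =
        (bFanIsLimit.{w} M).lift (Fan.mk bfour.{w} (fun i => f (M.left i j))) := by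
    intro j
    have hmem : ∀ z : bfour.{w}, (fun i => (cond (a (M.left i j)) z.1 z.2,
        cond (a' (M.left i j)) z.1 z.2) : bP.{w} M) ∈
          {wp : bP.{w} M | (wp i₀).1 = (wp i₁).2} := by
      intro z
      show cond (a (M.left i₀ j)) z.1 z.2 = cond (a' (M.left i₁ j)) z.1 z.2
      rw [hL j]
    set gj : BoundedLatticeHom (bfour.{w} : Type w) (bRel.{w} M i₀ i₁) :=
      { toFun := fun z => ⟨fun i => (cond (a (M.left i j)) z.1 z.2,
          cond (a' (M.left i j)) z.1 z.2), hmem z⟩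
        map_sup' := fun z z' => Subtype.ext (funext fun i =>
          Prod.ext (cond_sup _ _ _ _ _) (cond_sup _ _ _ _ _))
        map_inf' := fun z z' => Subtype.ext (funext fun i =>
          Prod.ext (cond_inf _ _ _ _ _) (cond_inf _ _ _ _ _))
        map_top' := Subtype.ext (funext fun i => Prod.ext (cond_self _ _) (cond_self _ _))
        map_bot' := Subtype.ext (funext fun i =>
          Prod.ext (cond_self _ _) (cond_self _ _)) } with hgj
    exact ⟨BoolAlg.ofHom gj, bhom_ext fun z => rfl⟩
  obtain ⟨g, hg⟩ := hclosed bfour.{w} f hleft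
  have hev := congrArg (fun hh => bap hh (ULift.up true, ULift.up false)) hg
  have hval : (bap g (ULift.up true, ULift.up false)).val =
      bap ((bFanIsLimit.{w} M).lift (Fan.mk bfour.{w} (fun i => f (M.right i))))
        (ULift.up true, ULift.up false) := hev
  have hprop := (bap g (ULift.up true, ULift.up false)).2
  rw [hval] at hprop
  have : (ULift.up true : ULift.{w} Bool) = ULift.up false := by
    have h0 : cond (a (M.right i₀)) (ULift.up.{w} true) (ULift.up.{w} false) =
        cond (a' (M.right i₁)) (ULift.up.{w} true) (ULift.up.{w} false) := hprop
    rwa [hr₀, hr₁] at h0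
  exact Bool.noConfusion (congrArg ULift.down this)

end

end ConflictSide

section Degenerate

variable {C : Type u} [Category.{v} C] [HasFiniteLimits C]

/-- A conflict for `M` plus `M`-closedness of relations forces a preorder. -/
theorem conflict_trivial {M : Matr} (hC : M.Conflict)
    (h : M.HasClosedRels C (MorphismProperty.monomorphisms C)) (X Y : C) :
    Subsingleton (X ⟶ Y) := by
  obtain ⟨i₀, i₁, a, a', hL, hr₀, hr₁⟩ := hC
  constructor
  intro u v
  set W : C := Y ⨯ Y with hW
  set P : C := ∏ᶜ (fun _ : Fin M.n => W) with hP
  set pr : Fin M.n → (P ⟶ W) := fun i => Pi.π (fun _ : Fin M.n => W) i with hpr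
  have hlim : IsLimit (Fan.mk P pr) := productIsProduct (fun _ : Fin M.n => W)
  set p : P ⟶ Y := pr i₀ ≫ prod.fst with hp
  set q : P ⟶ Y := pr i₁ ≫ prod.snd with hq
  set r : equalizer p q ⟶ P := equalizer.ι p q with hr
  have hfac : ∀ (c : Fin M.n → (X ⟶ W)) (i : Fin M.n),
      hlim.lift (Fan.mk X c) ≫ pr i = c i := fun c i => hlim.fac (Fan.mk X c) ⟨i⟩
  set hsel : Bool → (X ⟶ Y) := fun c => cond c u v with hhsel
  set f : Fin M.k → (X ⟶ W) := fun t => prod.lift (hsel (a t)) (hsel (a' t)) with hf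
  have hleft : ∀ j : Fin M.m, ∃ g : X ⟶ equalizer p q,
      g ≫ r = hlim.lift (Fan.mk X (fun i => f (M.left i j))) := by
    intro j
    have hw : hlim.lift (Fan.mk X (fun i => f (M.left i j))) ≫ p =
        hlim.lift (Fan.mk X (fun i => f (M.left i j))) ≫ q := by
      rw [hp, hq, ← Category.assoc, ← Category.assoc, hfac, hfac, hf]
      simp only [prod.lift_fst, prod.lift_snd]
      rw [hL j]
    exact ⟨equalizer.lift _ hw, equalizer.lift_ι _ _⟩
  obtain ⟨g, hg⟩ := h W P (equalizer p q) pr hlim r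
    (show Mono r from inferInstance) X f hleft
  set ψ : X ⟶ P := hlim.lift (Fan.mk X (fun i => f (M.right i))) with hψ
  have hcond : ψ ≫ p = ψ ≫ q := by
    rw [← hg, Category.assoc, Category.assoc, hr, equalizer.condition]
  have e1 : ψ ≫ p = u := by
    rw [hp, ← Category.assoc, hψ, hfac, hf]
    simp only [prod.lift_fst]
    rw [hr₀, hhsel]
    rfl
  have e2 : ψ ≫ q = v := by
    rw [hq, ← Category.assoc, hψ, hfac, hf]
    simp only [prod.lift_snd]
    rw [hr₁, hhsel]
    rfl
  rw [e1, e2] at hcond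
  exact hcond

end Degenerate

/-! ### A small complete non-preorder category: the dual of finite sets -/

section FSCat

/-- Objects: natural numbers (standing for the finite sets `Fin a`),
as a structure to avoid instance clashes. -/
structure FS : Type u where
  n : ℕ

instance : Category.{v} FS.{u} where
  Hom a b := ULift.{v} (Fin b.n → Fin a.n)
  id _ := ULift.up id
  comp f g := ULift.up (f.down ∘ g.down)

lemma FS.comp_down {a b c : FS.{u}} (f : a ⟶ b) (g : b ⟶ c) :
    (f ≫ g).down = f.down ∘ g.down := rfl

lemma FS.hom_ext {a b : FS.{u}} (f g : a ⟶ b) (h : f.down = g.down) : f = g :=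
  congrArg ULift.up h

/-- Terminal object. -/
def FS.T : FS.{u} := ⟨0⟩

instance (X : FS.{u}) : Unique (X ⟶ FS.T.{u}) where
  default := ULift.up (fun x => Fin.elim0 x)
  uniq f := FS.hom_ext _ _ (funext fun x => Fin.elim0 x)

instance : HasTerminal FS.{u} := hasTerminal_of_unique FS.T.{u}

noncomputable section

/-- Binary fan on `a + b`. -/
def FS.prodFan (a b : FS.{u}) : BinaryFan a b :=
  BinaryFan.mk (P := (⟨a.n + b.n⟩ : FS.{u}))
    (ULift.up (fun x : Fin a.n => Fin.castAdd b.n x))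
    (ULift.up (fun y : Fin b.n => Fin.natAdd a.n y))

def FS.prodFanIsLimit (a b : FS.{u}) : IsLimit (FS.prodFan.{u} a b) := by
  refine BinaryFan.IsLimit.mk _
    (fun {T} f g => ULift.up (fun p => Sum.elim f.down g.down (finSumFinEquiv.symm p)))
    (fun {T} f g => FS.hom_ext _ _ (funext fun x => ?_))
    (fun {T} f g => FS.hom_ext _ _ (funext fun y => ?_))
    (fun {T} f g m hm₁ hm₂ => FS.hom_ext _ _ (funext fun p => ?_))
  · show Sum.elim f.down g.down (finSumFinEquiv.symm (Fin.castAdd b.n x)) = f.down x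
    exact congrArg (Sum.elim f.down g.down) (finSumFinEquiv_symm_apply_castAdd x)
  · show Sum.elim f.down g.down (finSumFinEquiv.symm (Fin.natAdd a.n y)) = g.down y
    exact congrArg (Sum.elim f.down g.down) (finSumFinEquiv_symm_apply_natAdd y)
  · obtain ⟨s, hs⟩ := finSumFinEquiv.surjective p
    subst hs
    show m.down (finSumFinEquiv s) = Sum.elim f.down g.down (finSumFinEquiv.symm _)
    rw [Equiv.symm_apply_apply]
    cases s with
    | inl x => exact congrArg (fun h : T ⟶ a => h.down x) hm₁
    | inr y => exact congrArg (fun h : T ⟶ b => h.down y) hm₂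

instance : HasBinaryProducts FS.{u} := by
  have : ∀ (X Y : FS.{u}), HasLimit (pair X Y) := by
    intro X Y
    exact HasLimit.mk ⟨_, FS.prodFanIsLimit X Y⟩
  exact hasBinaryProducts_of_hasLimit_pair _

instance : HasFiniteProducts FS.{u} := hasFiniteProducts_of_has_binary_and_terminal

/-- Equalizer relation: dual coequalizer relation on `Fin a.n`. -/
def FS.eqRel {a b : FS.{u}} (f g : a ⟶ b) (w x : Fin a.n) : Prop :=
  ∃ y, f.down y = w ∧ g.down y = x

noncomputable instance FS.quotFintype {a b : FS.{u}} (f g : a ⟶ b) :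
    Fintype (Quot (FS.eqRel f g)) := by
  classical
  exact Fintype.ofSurjective (Quot.mk _) (fun q => Quot.exists_rep q)

def FS.eqObj {a b : FS.{u}} (f g : a ⟶ b) : FS.{u} :=
  ⟨Fintype.card (Quot (FS.eqRel f g))⟩

def FS.eqObjEquiv {a b : FS.{u}} (f g : a ⟶ b) :
    Quot (FS.eqRel f g) ≃ Fin ((FS.eqObj f g).n) :=
  Fintype.equivFin _

def FS.eqι {a b : FS.{u}} (f g : a ⟶ b) : FS.eqObj f g ⟶ a :=
  ULift.up (fun w => FS.eqObjEquiv f g (Quot.mk _ w))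

lemma FS.eqFork_condition {a b : FS.{u}} (f g : a ⟶ b) :
    FS.eqι f g ≫ f = FS.eqι f g ≫ g :=
  FS.hom_ext _ _ (funext fun y =>
    congrArg (FS.eqObjEquiv f g) (Quot.sound ⟨y, rfl, rfl⟩))

def FS.eqForkIsLimit {a b : FS.{u}} (f g : a ⟶ b) :
    IsLimit (Fork.ofι (FS.eqι f g) (FS.eqFork_condition f g)) := by
  refine Fork.IsLimit.mk _ (fun s => ?_) (fun s => ?_) (fun s m hm => ?_)
  · refine ULift.up (fun q => Quot.lift s.ι.down ?_ ((FS.eqObjEquiv f g).symm q))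
    rintro w x ⟨y, rfl, rfl⟩
    exact congrArg (fun h : s.pt ⟶ b => h.down y) s.condition
  · refine FS.hom_ext _ _ (funext fun w => ?_)
    show Quot.lift s.ι.down _ ((FS.eqObjEquiv f g).symm (FS.eqObjEquiv f g (Quot.mk _ w)))
      = s.ι.down w
    rw [Equiv.symm_apply_apply]
  · refine FS.hom_ext _ _ (funext fun q => ?_)
    obtain ⟨qq, rfl⟩ := (FS.eqObjEquiv f g).surjective q
    obtain ⟨w, rfl⟩ := Quot.exists_rep qq
    have h2 := congrArg (fun h : s.pt ⟶ a => h.down w) hm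
    show m.down (FS.eqObjEquiv f g (Quot.mk _ w)) =
      Quot.lift s.ι.down _ ((FS.eqObjEquiv f g).symm (FS.eqObjEquiv f g (Quot.mk _ w)))
    rw [Equiv.symm_apply_apply]
    exact h2

instance : HasEqualizers FS.{u} := by
  have : ∀ {X Y : FS.{u}} (f g : X ⟶ Y), HasLimit (parallelPair f g) := by
    intro X Y f g
    exact HasLimit.mk ⟨_, FS.eqForkIsLimit f g⟩
  exact hasEqualizers_of_hasLimit_parallelPair _

instance : HasFiniteLimits FS.{u} := hasFiniteLimits_of_hasEqualizers_and_finite_products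

end

/-- `FS` is not a preorder. -/
lemma FS.not_preorder :
    ¬ Subsingleton ((⟨2⟩ : FS.{u}) ⟶ (⟨2⟩ : FS.{u})) := by
  intro h
  have h1 : (ULift.up id : (⟨2⟩ : FS.{u}) ⟶ (⟨2⟩ : FS.{u})) =
      ULift.up (fun _ => (0 : Fin 2)) := h.elim _ _
  have h2 := congrArg (fun hh : (⟨2⟩ : FS.{u}) ⟶ (⟨2⟩ : FS.{u}) => hh.down (1 : Fin 2)) h1
  simp at h2

end FSCat

/-- If `M` has no conflict then `FS` has `M`-closed relations. -/
theorem noConflict_hasClosedRels_FS (M : Matr) (hM : ¬ M.Conflict) :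
    M.HasClosedRels FS.{u} (MorphismProperty.monomorphisms FS.{u}) := by
  classical
  intro X P R pr hP r hr Z f hleft
  have hrmono : Mono r := hr
  -- the underlying function of `r` is surjective
  have hrsurj : Function.Surjective r.down := by
    by_contra hns
    rw [Function.Surjective] at hns
    push_neg at hns
    obtain ⟨y₀, hy₀⟩ := hns
    set g₁ : (⟨2⟩ : FS.{u}) ⟶ R := ULift.up (fun _ => (0 : Fin 2)) with hg₁
    set g₂ : (⟨2⟩ : FS.{u}) ⟶ R := ULift.up (fun y => if y = y₀ then 1 else 0) with hg₂
    have hcomp : g₁ ≫ r = g₂ ≫ r := by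
      refine FS.hom_ext _ _ (funext fun p => ?_)
      show g₁.down (r.down p) = g₂.down (r.down p)
      rw [hg₁, hg₂]
      simp only []
      rw [if_neg (hy₀ p)]
    have h12 : g₁ = g₂ := (cancel_mono r).mp hcomp
    have := congrArg (fun h : (⟨2⟩ : FS.{u}) ⟶ R => h.down y₀) h12
    simp only [hg₁, hg₂, if_pos rfl] at this
    exact absurd (congrArg Fin.val this) (by simp)
  -- the projections are jointly surjective
  have hUsurj : ∀ pp : Fin P.n, ∃ (i : Fin M.n) (x : Fin X.n), (pr i).down x = pp := by
    intro pp
    by_contra hns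
    push_neg at hns
    set m₁ : (⟨2⟩ : FS.{u}) ⟶ P := ULift.up (fun _ => (0 : Fin 2)) with hm₁
    set m₂ : (⟨2⟩ : FS.{u}) ⟶ P := ULift.up (fun q => if q = pp then 1 else 0) with hm₂
    have hcomp : m₁ = m₂ := by
      refine hP.hom_ext fun ⟨i⟩ => ?_
      show m₁ ≫ pr i = m₂ ≫ pr i
      refine FS.hom_ext _ _ (funext fun x => ?_)
      show m₁.down ((pr i).down x) = m₂.down ((pr i).down x)
      rw [hm₁, hm₂]
      simp only []
      rw [if_neg (hns i x)]
    have := congrArg (fun h : (⟨2⟩ : FS.{u}) ⟶ P => h.down pp) hcomp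
    simp only [hm₁, hm₂, if_pos rfl] at this
    exact absurd (congrArg Fin.val this) (by simp)
  have hfac : ∀ (c : Fin M.n → (Z ⟶ X)) (i : Fin M.n),
      hP.lift (Fan.mk Z c) ≫ pr i = c i := fun c i => hP.fac (Fan.mk Z c) ⟨i⟩
  choose g hg using hleft
  set ψ : Z ⟶ P := hP.lift (Fan.mk Z fun i => f (M.right i)) with hψdef
  have hψu : ∀ (i : Fin M.n) (x : Fin X.n), ψ.down ((pr i).down x) = (f (M.right i)).down x :=
    fun i x => congrArg (fun h : Z ⟶ X => h.down x) (hfac _ i)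
  have hcolu : ∀ (j : Fin M.m) (i : Fin M.n) (x : Fin X.n),
      (hP.lift (Fan.mk Z fun i => f (M.left i j))).down ((pr i).down x) =
        (f (M.left i j)).down x :=
    fun j i x => congrArg (fun h : Z ⟶ X => h.down x) (hfac _ i)
  have hcolconst : ∀ (j : Fin M.m) (p p' : Fin P.n), r.down p = r.down p' →
      (hP.lift (Fan.mk Z fun i => f (M.left i j))).down p =
        (hP.lift (Fan.mk Z fun i => f (M.left i j))).down p' := by
    intro j p p' hpp
    have hcg : (hP.lift (Fan.mk Z fun i => f (M.left i j))).down = (g j).down ∘ r.down :=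
      (congrArg ULift.down (hg j)).symm
    rw [hcg]
    show (g j).down (r.down p) = (g j).down (r.down p')
    rw [hpp]
  have hkey : ∀ p p' : Fin P.n, r.down p = r.down p' → ψ.down p = ψ.down p' := by
    intro p p' hpp
    obtain ⟨i, x, hx⟩ := hUsurj p
    obtain ⟨i', x', hx'⟩ := hUsurj p'
    have hψp : ψ.down p = (f (M.right i)).down x := by rw [← hx]; exact hψu i x
    have hψp' : ψ.down p' = (f (M.right i')).down x' := by rw [← hx']; exact hψu i' x'
    have hleftc : ∀ j : Fin M.m, (f (M.left i j)).down x = (f (M.left i' j)).down x' := by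
      intro j
      have h1 := hcolu j i x
      have h2 := hcolu j i' x'
      rw [hx] at h1
      rw [hx'] at h2
      rw [← h1, ← h2]
      exact hcolconst j p p' hpp
    rw [hψp, hψp']
    by_contra hne
    apply hM
    refine ⟨i, i', fun t => decide ((f t).down x = (f (M.right i)).down x),
      fun t => decide ((f t).down x' = (f (M.right i)).down x), fun j => ?_, ?_, ?_⟩
    · show decide ((f (M.left i j)).down x = _) = decide ((f (M.left i' j)).down x' = _)
      rw [hleftc j]
    · simp
    · simpa using fun hcontra => hne hcontra.symm
  refine ⟨ULift.up (fun q => ψ.down (Function.surjInv hrsurj q)), ?_⟩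
  refine FS.hom_ext _ _ (funext fun p => ?_)
  show ψ.down (Function.surjInv hrsurj (r.down p)) = ψ.down p
  exact hkey _ _ (Function.surjInv_eq hrsurj (r.down p))

/-- For a set `S` of non-pointed matrices, every finitely
complete category with `S`-closed relations is a preorder (at most one
morphism between any two objects) if and only if the category `BoolAlg` of
Boolean algebras does not have `S`-closed relations. -/
theorem trivial_iff_not_BoolAlg (S : Set Matr) :
    (∀ (C : Type u) [Category.{v} C] [HasFiniteLimits C],
        Matr.HasSClosedRels S C (MorphismProperty.monomorphisms C) →
        ∀ X Y : C, Subsingleton (X ⟶ Y)) ↔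
    ¬ Matr.HasSClosedRels S BoolAlg.{w}
        (MorphismProperty.monomorphisms BoolAlg.{w}) := by
  constructor
  · intro h hBA
    have hnc : ∀ M ∈ S, ¬ M.Conflict := fun M hMS hc =>
      conflict_not_hasClosedRels.{w} M hc (hBA M hMS)
    have hFS : Matr.HasSClosedRels S FS.{u} (MorphismProperty.monomorphisms FS.{u}) :=
      fun M hMS => noConflict_hasClosedRels_FS M (hnc M hMS)
    exact FS.not_preorder.{u} (h FS.{u} hFS ⟨2⟩ ⟨2⟩)
  · intro hBA C _ _ hS X Y
    simp only [Matr.HasSClosedRels] at hBA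
    push_neg at hBA
    obtain ⟨M, hMS, hMfail⟩ := hBA
    have hc : M.Conflict := by
      by_contra hnc
      exact hMfail (noConflict_hasClosedRels.{w} M hnc)
    exact conflict_trivial hc (hS M hMS) X Y
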